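/- arXiv:2207.02115 — 5 statements merged into one kernel-verified Lean document; each statement's English description precedes it below -/
import Mathlib

section
/- If T is a power partial isometry contraction on H, then the unitary part H_u = ⋂_{n ∈ ℤ₊} [ker(I - T^{*n}T^n) ∩ ker(I - T^n T^{*n})] equals ⋂_{n ∈ ℤ₊} (T^{*n}H ∩ T^n H). -/
open ContinuousLinearMap

section Aux

variable {H : Type*} [NormedAddCommGroup H] [InnerProductSpace ℂ H] [CompleteSpace H]

local notation "⟪" x ", " y "⟫" => @inner ℂ _ _ x y

lemma aux_pi (A : H →L[ℂ] H) (hA : ∀ h ∈ (LinearMap.ker (A : H →ₗ[ℂ] H))ᗮ, ‖A h‖ = ‖h‖) :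
    LinearMap.ker (((1 : H →L[ℂ] H) - adjoint A ∘L A : H →L[ℂ] H) : H →ₗ[ℂ] H) = LinearMap.range ((adjoint A : H →L[ℂ] H) : H →ₗ[ℂ] H) ∧
    LinearMap.ker (((1 : H →L[ℂ] H) - A ∘L adjoint A : H →L[ℂ] H) : H →ₗ[ℂ] H) = LinearMap.range ((A : H →L[ℂ] H) : H →ₗ[ℂ] H) := by
  set K := (LinearMap.ker (A : H →ₗ[ℂ] H))ᗮ with hK
  -- inner product preservation on K
  have hinner : ∀ x y : K, ⟪A x, A y⟫ = ⟪(x : H), (y : H)⟫ := by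
    have := (LinearMap.norm_map_iff_inner_map_map
      (𝕜 := ℂ) (A.toLinearMap.comp K.subtype)).mp (fun x => hA x x.2)
    simpa using this
  -- A* A h = h for h in K
  have hAA : ∀ h ∈ K, adjoint A (A h) = h := by
    intro h hh
    apply ext_inner_right ℂ
    intro z
    obtain ⟨z₀, hz₀, z₁, hz₁, rfl⟩ :=
      (LinearMap.ker (A : H →ₗ[ℂ] H)).exists_add_mem_mem_orthogonal z
    have hz0 : ⟪h, z₀⟫ = 0 := by
      have := hh z₀ hz₀
      rw [← inner_conj_symm, this, map_zero]
    have hAz0 : A z₀ = 0 := hz₀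
    rw [adjoint_inner_left, inner_add_right, hz0, zero_add, map_add, hAz0, zero_add]
    exact hinner ⟨h, hh⟩ ⟨z₁, hz₁⟩
  -- range of adjoint is contained in K
  have hrange : LinearMap.range ((adjoint A : H →L[ℂ] H) : H →ₗ[ℂ] H) ≤ K := by
    rintro x ⟨y, rfl⟩
    intro u hu
    rw [ContinuousLinearMap.coe_coe, adjoint_inner_right, (show A u = 0 from hu), inner_zero_left]
  have hKrange : K ≤ LinearMap.range ((adjoint A : H →L[ℂ] H) : H →ₗ[ℂ] H) := by
    intro h hh
    exact ⟨A h, hAA h hh⟩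
  have hker1 : LinearMap.ker (((1 : H →L[ℂ] H) - adjoint A ∘L A : H →L[ℂ] H) : H →ₗ[ℂ] H) = K := by
    ext h
    simp only [LinearMap.mem_ker, ContinuousLinearMap.coe_coe, ContinuousLinearMap.coe_sub', Pi.sub_apply,
      ContinuousLinearMap.one_apply, ContinuousLinearMap.coe_comp', Function.comp_apply,
      sub_eq_zero]
    constructor
    · intro hh
      exact hrange ⟨A h, hh.symm⟩
    · intro hh
      exact (hAA h hh).symm
  refine ⟨hker1.trans (le_antisymm hKrange hrange), ?_⟩
  ext h
  simp only [LinearMap.mem_ker, ContinuousLinearMap.coe_coe, ContinuousLinearMap.coe_sub', Pi.sub_apply,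
    ContinuousLinearMap.one_apply, ContinuousLinearMap.coe_comp', Function.comp_apply,
    sub_eq_zero]
  constructor
  · intro hh
    exact ⟨adjoint A h, hh.symm⟩
  · rintro ⟨x, rfl⟩
    obtain ⟨x₀, hx₀, x₁, hx₁, rfl⟩ := (LinearMap.ker (A : H →ₗ[ℂ] H)).exists_add_mem_mem_orthogonal x
    have hAx0 : A x₀ = 0 := hx₀
    rw [ContinuousLinearMap.coe_coe, map_add, hAx0, zero_add, hAA x₁ hx₁]

end Aux

theorem stmt6 {H : Type*} [NormedAddCommGroup H] [InnerProductSpace ℂ H] [CompleteSpace H]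
    (T : H →L[ℂ] H) (hT : ∀ h : H, ‖T h‖ ≤ ‖h‖)
    (hppi : ∀ n : ℕ, 1 ≤ n → ∀ h ∈ (LinearMap.ker ((T ^ n : H →L[ℂ] H) : H →ₗ[ℂ] H))ᗮ, ‖(T ^ n) h‖ = ‖h‖) :
    (⨅ n : ℕ, (LinearMap.ker (((1 : H →L[ℂ] H) - adjoint (T ^ n) ∘L (T ^ n) : H →L[ℂ] H) : H →ₗ[ℂ] H) ⊓
        LinearMap.ker (((1 : H →L[ℂ] H) - (T ^ n) ∘L adjoint (T ^ n) : H →L[ℂ] H) : H →ₗ[ℂ] H)))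
      = ⨅ n : ℕ, (LinearMap.range ((adjoint (T ^ n) : H →L[ℂ] H) : H →ₗ[ℂ] H) ⊓ LinearMap.range ((T ^ n : H →L[ℂ] H) : H →ₗ[ℂ] H)) := by
  refine iInf_congr fun n => ?_
  have hA : ∀ h ∈ (LinearMap.ker ((T ^ n : H →L[ℂ] H) : H →ₗ[ℂ] H))ᗮ, ‖(T ^ n) h‖ = ‖h‖ := by
    rcases Nat.eq_zero_or_pos n with rfl | hn
    · intro h _; simp
    · exact hppi n hn
  obtain ⟨h1, h2⟩ := aux_pi (T ^ n) hA
  rw [h1, h2]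
end

section
/- Let (T₁, T₂) be a pair of bounded operators on H with T₁ a contraction, and suppose there is a unitary U commuting with T₁ and T₂ such that T₁T₂ = U T₂T₁ and T₁*T₂ = U* T₂T₁*. Then the unitary part H_u¹ and completely non-unitary part H_{¬u}¹ of the canonical decomposition of T₁ both reduce T₂. -/
open ContinuousLinearMap

/-- The unitary part of the canonical decomposition of a contraction. -/
noncomputable def unitaryPart {H : Type*} [NormedAddCommGroup H] [InnerProductSpace ℂ H] [CompleteSpace H]
    (T : H →L[ℂ] H) : Submodule ℂ H :=
  ⨅ m : ℕ, (LinearMap.ker (((1 : H →L[ℂ] H) - adjoint (T ^ m) ∘L (T ^ m) : H →L[ℂ] H) : H →ₗ[ℂ] H) ⊓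
    LinearMap.ker (((1 : H →L[ℂ] H) - (T ^ m) ∘L adjoint (T ^ m) : H →L[ℂ] H) : H →ₗ[ℂ] H))

lemma aux_commute_inv {M : Type*} [Monoid M] {u su a : M} (h1 : su * u = 1) (h2 : u * su = 1)
    (h : Commute u a) : Commute su a := by
  calc su * a = su * (a * u) * su := by
        rw [show su * a = su * a * (u * su) by rw [h2, mul_one]]; simp only [mul_assoc]
    _ = su * (u * a) * su := by rw [h.eq]
    _ = (su * u) * (a * su) := by simp only [mul_assoc]
    _ = a * su := by rw [h1, one_mul]

lemma aux_pow_twist {M : Type*} [Monoid M] {a b v : M} (h : a * b = v * (b * a))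
    (hc : Commute v a) : ∀ m : ℕ, a ^ m * b = v ^ m * (b * a ^ m)
  | 0 => by simp
  | (m+1) => by
    calc a ^ (m+1) * b = a * (a ^ m * b) := by rw [pow_succ', mul_assoc]
      _ = a * (v ^ m * (b * a ^ m)) := by rw [aux_pow_twist h hc m]
      _ = v ^ m * (a * b) * a ^ m := by
          simp only [← mul_assoc]; rw [← (hc.pow_left m).eq]
      _ = v ^ m * (v * (b * a)) * a ^ m := by rw [h]
      _ = v ^ (m+1) * (b * a ^ (m+1)) := by
          rw [pow_succ v, pow_succ' a]; simp only [mul_assoc]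

lemma aux_twist_conj {M : Type*} [Monoid M] {a sa b v sv : M}
    (hv1 : sv * v = 1) (hv2 : v * sv = 1)
    (hva : Commute v a) (hvsa : Commute v sa)
    (h1 : a * b = v * (b * a)) (h2 : sa * b = sv * (b * sa)) (m : ℕ) :
    sa ^ m * (a ^ m * b) = b * (sa ^ m * a ^ m) ∧
    a ^ m * (sa ^ m * b) = b * (a ^ m * sa ^ m) := by
  have hsva : Commute sv a := aux_commute_inv hv1 hv2 hva
  have hsvsa : Commute sv sa := aux_commute_inv hv1 hv2 hvsa
  have hvv : Commute v sv := by unfold Commute SemiconjBy; rw [hv2, hv1]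
  have hpow1 : v ^ m * sv ^ m = 1 := by rw [← hvv.mul_pow, hv2, one_pow]
  have hpow2 : sv ^ m * v ^ m = 1 := by rw [← hvv.symm.mul_pow, hv1, one_pow]
  constructor
  · calc sa ^ m * (a ^ m * b) = sa ^ m * (v ^ m * (b * a ^ m)) := by rw [aux_pow_twist h1 hva]
      _ = v ^ m * (sa ^ m * b) * a ^ m := by
          simp only [← mul_assoc]; rw [← (hvsa.pow_pow m m).eq]
      _ = v ^ m * (sv ^ m * (b * sa ^ m)) * a ^ m := by rw [aux_pow_twist h2 hsvsa]
      _ = b * (sa ^ m * a ^ m) := by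
          simp only [← mul_assoc]; rw [hpow1, one_mul]
  · calc a ^ m * (sa ^ m * b) = a ^ m * (sv ^ m * (b * sa ^ m)) := by rw [aux_pow_twist h2 hsvsa]
      _ = sv ^ m * (a ^ m * b) * sa ^ m := by
          simp only [← mul_assoc]; rw [← (hsva.pow_pow m m).eq]
      _ = sv ^ m * (v ^ m * (b * a ^ m)) * sa ^ m := by rw [aux_pow_twist h1 hva]
      _ = b * (a ^ m * sa ^ m) := by
          simp only [← mul_assoc]; rw [hpow2, one_mul]

lemma mem_unitaryPart_iff {H : Type*} [NormedAddCommGroup H] [InnerProductSpace ℂ H]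
    [CompleteSpace H] {T : H →L[ℂ] H} {x : H} :
    x ∈ unitaryPart T ↔
      ∀ m : ℕ, x = ((star T) ^ m) ((T ^ m) x) ∧ x = (T ^ m) (((star T) ^ m) x) := by
  simp only [unitaryPart, Submodule.mem_iInf, Submodule.mem_inf, LinearMap.mem_ker, ContinuousLinearMap.coe_coe,
    ContinuousLinearMap.sub_apply, ContinuousLinearMap.one_apply,
    ContinuousLinearMap.comp_apply, sub_eq_zero, ← star_eq_adjoint, star_pow]

lemma key_lemma {H : Type*} [NormedAddCommGroup H] [InnerProductSpace ℂ H] [CompleteSpace H]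
    (T₁ T₂ U : H →L[ℂ] H)
    (hU1 : star U * U = 1) (hU2 : U * star U = 1)
    (hUT₁ : Commute U T₁)
    (htw1 : T₁ * T₂ = U * (T₂ * T₁))
    (htw2 : star T₁ * T₂ = star U * (T₂ * star T₁)) :
    ∀ x ∈ unitaryPart T₁, T₂ x ∈ unitaryPart T₁ := by
  intro x hx
  rw [mem_unitaryPart_iff] at hx ⊢
  intro m
  have hUsT₁ : Commute U (star T₁) := aux_commute_inv hU2 hU1 hUT₁.star_star
  obtain ⟨k1, k2⟩ := aux_twist_conj (sa := star T₁) (sv := star U)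
    hU1 hU2 hUT₁ hUsT₁ htw1 htw2 m
  obtain ⟨hx1, hx2⟩ := hx m
  have e1 := ContinuousLinearMap.ext_iff.mp k1 x
  have e2 := ContinuousLinearMap.ext_iff.mp k2 x
  simp only [ContinuousLinearMap.mul_apply] at e1 e2
  exact ⟨by rw [e1, ← hx1], by rw [e2, ← hx2]⟩

theorem stmt11 {H : Type*} [NormedAddCommGroup H] [InnerProductSpace ℂ H] [CompleteSpace H]
    (T₁ T₂ U : H →L[ℂ] H) (hT₁ : ∀ h : H, ‖T₁ h‖ ≤ ‖h‖)
    (hUunit : adjoint U ∘L U = 1 ∧ U ∘L adjoint U = 1)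
    (hUT₁ : Commute U T₁) (hUT₂ : Commute U T₂)
    (htw1 : T₁ ∘L T₂ = U ∘L (T₂ ∘L T₁))
    (htw2 : adjoint T₁ ∘L T₂ = adjoint U ∘L (T₂ ∘L adjoint T₁)) :
    (∀ x ∈ unitaryPart T₁, T₂ x ∈ unitaryPart T₁) ∧
    (∀ x ∈ unitaryPart T₁, adjoint T₂ x ∈ unitaryPart T₁) ∧
    (∀ x ∈ (unitaryPart T₁)ᗮ, T₂ x ∈ (unitaryPart T₁)ᗮ) ∧
    (∀ x ∈ (unitaryPart T₁)ᗮ, adjoint T₂ x ∈ (unitaryPart T₁)ᗮ) := by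
  have hU1 : star U * U = 1 := hUunit.1
  have hU2 : U * star U = 1 := hUunit.2
  have htw1' : T₁ * T₂ = U * (T₂ * T₁) := htw1
  have htw2' : star T₁ * T₂ = star U * (T₂ * star T₁) := htw2
  have part1 := key_lemma T₁ T₂ U hU1 hU2 hUT₁ htw1' htw2'
  have hsUT₁ : Commute (star U) T₁ := aux_commute_inv hU1 hU2 hUT₁
  have hsUsT₂ : Commute (star U) (star T₂) := hUT₂.star_star
  have hUsT₁ : Commute U (star T₁) := aux_commute_inv hU2 hU1 hUT₁.star_star
  have hUsT₂ : Commute U (star T₂) := aux_commute_inv hU2 hU1 hsUsT₂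
  have hstar2 : star T₂ * T₁ = T₁ * star T₂ * U := by
    have := congrArg star htw2'
    simpa only [star_mul, star_star, mul_assoc] using this
  have h1' : T₁ * star T₂ = star U * (star T₂ * T₁) := by
    calc T₁ * star T₂ = T₁ * star T₂ * (U * star U) := by rw [hU2, mul_one]
      _ = (star T₂ * T₁) * star U := by rw [← mul_assoc, ← hstar2]
      _ = star U * (star T₂ * T₁) := ((hsUsT₂.mul_right hsUT₁).eq).symm
  have hstar1 : star T₂ * star T₁ = star T₁ * star T₂ * star U := by
    have := congrArg star htw1'
    simpa only [star_mul, star_star, mul_assoc] using this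
  have h2' : star T₁ * star T₂ = star (star U) * (star T₂ * star T₁) := by
    rw [star_star]
    calc star T₁ * star T₂ = star T₁ * star T₂ * (star U * U) := by rw [hU1, mul_one]
      _ = (star T₂ * star T₁) * U := by rw [← mul_assoc, ← hstar1]
      _ = U * (star T₂ * star T₁) := ((hUsT₂.mul_right hUsT₁).eq).symm
  have part2 : ∀ x ∈ unitaryPart T₁, adjoint T₂ x ∈ unitaryPart T₁ :=
    key_lemma T₁ (star T₂) (star U)
      (by rw [star_star]; exact hU2) (by rw [star_star]; exact hU1)
      hsUT₁ h1' h2'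
  refine ⟨part1, part2, ?_, ?_⟩
  · intro x hx
    rw [Submodule.mem_orthogonal] at hx ⊢
    intro u hu
    rw [← ContinuousLinearMap.adjoint_inner_left]
    exact hx _ (part2 u hu)
  · intro x hx
    rw [Submodule.mem_orthogonal] at hx ⊢
    intro u hu
    rw [ContinuousLinearMap.adjoint_inner_right]
    exact hx _ (part1 u hu)
end

section
/- Let (T₁, T₂) be a pair of isometries on H forming a doubly twisted (𝒰₂-twisted) pair with unitary twist U. Then ker(T₁*) is a reducing subspace for T₂, and (I - T₂T₂*)(ker T₁*) = ker(T₁*) ∩ ker(T₂*). -/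
open ContinuousLinearMap

set_option maxHeartbeats 1000000 in
theorem stmt12 {H : Type*} [NormedAddCommGroup H] [InnerProductSpace ℂ H] [CompleteSpace H]
    (T₁ T₂ U : H →L[ℂ] H)
    (h1iso : adjoint T₁ ∘L T₁ = 1) (h2iso : adjoint T₂ ∘L T₂ = 1)
    (hUunit : adjoint U ∘L U = 1 ∧ U ∘L adjoint U = 1)
    (hUT₁ : Commute U T₁) (hUT₂ : Commute U T₂)
    (htw1 : T₁ ∘L T₂ = U ∘L (T₂ ∘L T₁))
    (htw2 : adjoint T₁ ∘L T₂ = adjoint U ∘L (T₂ ∘L adjoint T₁)) :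
    (∀ x ∈ LinearMap.ker (adjoint T₁ : H →ₗ[ℂ] H), T₂ x ∈ LinearMap.ker (adjoint T₁ : H →ₗ[ℂ] H)) ∧
    (∀ x ∈ LinearMap.ker (adjoint T₁ : H →ₗ[ℂ] H), adjoint T₂ x ∈ LinearMap.ker (adjoint T₁ : H →ₗ[ℂ] H)) ∧
    (LinearMap.ker (adjoint T₁ : H →ₗ[ℂ] H)).map (((1 : H →L[ℂ] H) - T₂ ∘L adjoint T₂ : H →L[ℂ] H) : H →ₗ[ℂ] H)
      = LinearMap.ker (adjoint T₁ : H →ₗ[ℂ] H) ⊓ LinearMap.ker (adjoint T₂ : H →ₗ[ℂ] H) := by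
  have hUU : ∀ x : H, adjoint U (U x) = x := fun x => by
    have := congrFun (congrArg (DFunLike.coe) hUunit.1) x
    simpa using this
  have hUU' : ∀ x : H, U (adjoint U x) = x := fun x => by
    have := congrFun (congrArg (DFunLike.coe) hUunit.2) x
    simpa using this
  have h2 : ∀ x : H, adjoint T₂ (T₂ x) = x := fun x => by
    have := congrFun (congrArg (DFunLike.coe) h2iso) x
    simpa using this
  -- Commutation with adjoints
  have hUT₁' : adjoint T₁ ∘L adjoint U = adjoint U ∘L adjoint T₁ := by
    have h := hUT₁.eq
    have := congrArg adjoint h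
    simpa [adjoint_comp, mul_def] using this
  have hcomm : ∀ x : H, adjoint T₁ (U x) = U (adjoint T₁ x) := by
    intro x
    have h1 := congrFun (congrArg (DFunLike.coe) hUT₁') (U x)
    simp only [comp_apply] at h1
    rw [hUU] at h1
    calc adjoint T₁ (U x) = U (adjoint U (adjoint T₁ (U x))) := (hUU' _).symm
      _ = U (adjoint T₁ x) := by rw [h1]
  -- adjoint of htw1
  have htw1' : adjoint T₂ ∘L adjoint T₁
      = (adjoint T₁ ∘L adjoint T₂) ∘L adjoint U := by
    have := congrArg adjoint htw1
    simpa [adjoint_comp, comp_assoc] using this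
  have inv1 : ∀ x ∈ LinearMap.ker (adjoint T₁ : H →ₗ[ℂ] H), T₂ x ∈ LinearMap.ker (adjoint T₁ : H →ₗ[ℂ] H) := by
    intro x hx
    have hx0 : adjoint T₁ x = 0 := hx
    have := congrFun (congrArg (DFunLike.coe) htw2) x
    simp only [comp_apply] at this
    rw [hx0] at this
    simpa [this] using (LinearMap.mem_ker.2 (by simp [this]))
  have inv2 : ∀ x ∈ LinearMap.ker (adjoint T₁ : H →ₗ[ℂ] H),
      adjoint T₂ x ∈ LinearMap.ker (adjoint T₁ : H →ₗ[ℂ] H) := by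
    intro x hx
    have hx0 : adjoint T₁ x = 0 := hx
    have h1 := congrFun (congrArg (DFunLike.coe) htw1') (U x)
    simp only [comp_apply] at h1
    rw [hUU] at h1
    have : adjoint T₁ (adjoint T₂ x) = adjoint T₂ (adjoint T₁ (U x)) := h1.symm
    rw [hcomm, hx0] at this
    exact LinearMap.mem_ker.2 (by simp [this])
  refine ⟨inv1, inv2, ?_⟩
  ext x
  simp only [Submodule.mem_map, LinearMap.mem_ker, Submodule.mem_inf, ContinuousLinearMap.coe_coe]
  have happ : ∀ y : H, ((1 : H →L[ℂ] H) - T₂ ∘L adjoint T₂) y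
      = y - T₂ (adjoint T₂ y) := fun y => by
    rw [ContinuousLinearMap.sub_apply, ContinuousLinearMap.one_apply,
      ContinuousLinearMap.comp_apply]
  constructor
  · rintro ⟨y, hy, rfl⟩
    have hy0 : adjoint T₁ y = 0 := hy
    have h1 : adjoint T₁ (T₂ (adjoint T₂ y)) = 0 := inv1 _ (inv2 _ hy)
    rw [happ]
    constructor
    · rw [map_sub, hy0, h1, sub_zero]
    · rw [map_sub, h2, sub_self]
  · rintro ⟨h1, h2'⟩
    exact ⟨x, h1, by rw [happ, h2', map_zero, sub_zero]⟩
end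

section
/- Let (T₁, T₂) be a doubly twisted pair of isometries on H with twist U. Then for every m ≥ 1, (I - T₂^m T₂^{*m})(ker T₁*) = ⊕_{k=0}^{m-1} T₂^k (ker T₁* ∩ ker T₂*), an orthogonal direct sum. -/
open ContinuousLinearMap

theorem stmt13 {H : Type*} [NormedAddCommGroup H] [InnerProductSpace ℂ H] [CompleteSpace H]
    (T₁ T₂ U : H →L[ℂ] H)
    (h1iso : adjoint T₁ ∘L T₁ = 1) (h2iso : adjoint T₂ ∘L T₂ = 1)
    (hUunit : adjoint U ∘L U = 1 ∧ U ∘L adjoint U = 1)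
    (hUT₁ : Commute U T₁) (hUT₂ : Commute U T₂)
    (htw1 : T₁ ∘L T₂ = U ∘L (T₂ ∘L T₁))
    (htw2 : adjoint T₁ ∘L T₂ = adjoint U ∘L (T₂ ∘L adjoint T₁)) :
    ∀ m : ℕ, 1 ≤ m →
      (LinearMap.ker (adjoint T₁ : H →ₗ[ℂ] H)).map (((1 : H →L[ℂ] H) - (T₂ ^ m) ∘L adjoint (T₂ ^ m) : H →L[ℂ] H) : H →ₗ[ℂ] H)
        = (⨆ k ∈ Finset.range m,
            ((LinearMap.ker (adjoint T₁ : H →ₗ[ℂ] H) ⊓ LinearMap.ker (adjoint T₂ : H →ₗ[ℂ] H)).map (T₂ ^ k : H →ₗ[ℂ] H))) ∧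
      ∀ k l : ℕ, k < m → l < m → k ≠ l →
        Submodule.IsOrtho
          ((LinearMap.ker (adjoint T₁ : H →ₗ[ℂ] H) ⊓ LinearMap.ker (adjoint T₂ : H →ₗ[ℂ] H)).map (T₂ ^ k : H →ₗ[ℂ] H))
          ((LinearMap.ker (adjoint T₁ : H →ₗ[ℂ] H) ⊓ LinearMap.ker (adjoint T₂ : H →ₗ[ℂ] H)).map (T₂ ^ l : H →ₗ[ℂ] H)) := by
  set A := adjoint T₁ with hA
  set B := adjoint T₂ with hB
  have hBT : ∀ x, B (T₂ x) = x := by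
    intro x
    have := congrArg (fun f : H →L[ℂ] H => f x) h2iso
    simpa using this
  have hadjpow : ∀ n : ℕ, adjoint (T₂ ^ n) = B ^ n := by
    intro n
    rw [hB, ← star_eq_adjoint, ← star_eq_adjoint, star_pow]
  have hcancel : ∀ (k : ℕ) (x : H), (B ^ k) ((T₂ ^ k) x) = x := by
    intro k
    induction k with
    | zero => intro x; simp
    | succ n ih =>
      intro x
      rw [pow_succ B, pow_succ' T₂, mul_apply_eq_comp, mul_apply_eq_comp, hBT]
      exact ih x
  -- units
  have hU1 : star U * U = 1 := by rw [star_eq_adjoint]; exact hUunit.1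
  have hU2 : U * star U = 1 := by rw [star_eq_adjoint]; exact hUunit.2
  -- A commutes with U
  have hA' : star U * A = A * star U := by
    have h := (hUT₁.star_star).eq
    rw [star_eq_adjoint T₁, ← hA] at h
    exact h
  have hAU : A * U = U * A := by
    calc A * U = (U * star U) * (A * U) := by rw [hU2, one_mul]
      _ = U * ((star U * A) * U) := by noncomm_ring
      _ = U * ((A * star U) * U) := by rw [hA']
      _ = (U * A) * (star U * U) := by noncomm_ring
      _ = U * A := by rw [hU1, mul_one]
  -- T₂ preserves ker A
  have hT2mem : ∀ x, A x = 0 → A (T₂ x) = 0 := by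
    intro x hx
    have := congrArg (fun f : H →L[ℂ] H => f x) htw2
    simp only [comp_apply] at this
    rw [this, hx, map_zero, map_zero]
  -- B preserves ker A
  have hBA : A * B = (B * A) * U := by
    have h := congrArg adjoint htw1
    rw [adjoint_comp, adjoint_comp, adjoint_comp, ← hA, ← hB, ← star_eq_adjoint U] at h
    -- h : B ∘L A = (A ∘L B) ∘L star U
    have h' : B * A = (A * B) * star U := h
    calc A * B = (A * B) * (star U * U) := by rw [hU1, mul_one]
      _ = ((A * B) * star U) * U := by noncomm_ring
      _ = (B * A) * U := by rw [← h']
  have hBmem : ∀ x, A x = 0 → A (B x) = 0 := by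
    intro x hx
    have h := congrArg (fun f : H →L[ℂ] H => f x) hBA
    simp only [mul_apply_eq_comp] at h
    have hux : A (U x) = U (A x) := by
      have := congrArg (fun f : H →L[ℂ] H => f x) hAU
      simpa using this
    rw [h, hux, hx, map_zero, map_zero]
  have hT2powmem : ∀ (n : ℕ) (x : H), A x = 0 → A ((T₂ ^ n) x) = 0 := by
    intro n
    induction n with
    | zero => intro x hx; simpa using hx
    | succ n ih =>
      intro x hx
      rw [pow_succ' T₂, mul_apply_eq_comp]
      exact hT2mem _ (ih x hx)
  have hBpowmem : ∀ (n : ℕ) (x : H), A x = 0 → A ((B ^ n) x) = 0 := by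
    intro n
    induction n with
    | zero => intro x hx; simpa using hx
    | succ n ih =>
      intro x hx
      rw [pow_succ' B, mul_apply_eq_comp]
      exact hBmem _ (ih x hx)
  -- the key sum identity
  have hsum : ∀ (n : ℕ) (x : H),
      x - (T₂ ^ n) ((B ^ n) x)
        = ∑ k ∈ Finset.range n, (T₂ ^ k) ((B ^ k) x - T₂ (B ((B ^ k) x))) := by
    intro n
    induction n with
    | zero => intro x; simp
    | succ n ih =>
      intro x
      rw [Finset.sum_range_succ, ← ih, pow_succ T₂, pow_succ' B, mul_apply_eq_comp, mul_apply_eq_comp,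
        map_sub]
      abel
  intro m hm
  simp only [← ContinuousLinearMap.toLinearMap_pow]
  constructor
  · apply le_antisymm
    · rintro _ ⟨x, hx, rfl⟩
      have hx' : A x = 0 := hx
      have hval : ((1 : H →L[ℂ] H) - (T₂ ^ m) ∘L adjoint (T₂ ^ m)) x
          = ∑ k ∈ Finset.range m, (T₂ ^ k) ((B ^ k) x - T₂ (B ((B ^ k) x))) := by
        rw [hadjpow]
        simpa [sub_apply, one_apply, comp_apply] using hsum m x
      rw [ContinuousLinearMap.coe_coe, hval]
      apply Submodule.sum_mem
      intro k hk
      refine Submodule.mem_iSup_of_mem k (Submodule.mem_iSup_of_mem hk ?_)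
      refine ⟨(B ^ k) x - T₂ (B ((B ^ k) x)), ?_, rfl⟩
      have m1 : A ((B ^ k) x - T₂ (B ((B ^ k) x))) = 0 := by
        rw [map_sub, hBpowmem k x hx', hT2mem _ (hBmem _ (hBpowmem k x hx')), sub_zero]
      have m2 : B ((B ^ k) x - T₂ (B ((B ^ k) x))) = 0 := by
        rw [map_sub, hBT, sub_self]
      exact Submodule.mem_inf.mpr ⟨LinearMap.mem_ker.mpr m1, LinearMap.mem_ker.mpr m2⟩
    · refine iSup₂_le ?_
      intro k hk
      rintro _ ⟨w, hw, rfl⟩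
      have hw' := Submodule.mem_inf.mp hw
      have hwK : A w = 0 := hw'.1
      have hwB : B w = 0 := hw'.2
      have hkm : k < m := Finset.mem_range.mp hk
      refine ⟨(T₂ ^ k) w, hT2powmem k w hwK, ?_⟩
      have hz : (B ^ m) ((T₂ ^ k) w) = 0 := by
        have h1 : (B ^ m) ((T₂ ^ k) w) = (B ^ (m - k)) w := by
          conv_lhs => rw [show m = (m - k) + k from (Nat.sub_add_cancel hkm.le).symm]
          rw [pow_add, mul_apply_eq_comp, hcancel]
        obtain ⟨j, hj⟩ : ∃ j, m - k = j + 1 := ⟨m - k - 1, by omega⟩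
        rw [h1, hj, pow_succ, mul_apply_eq_comp, hwB, map_zero]
      rw [ContinuousLinearMap.coe_coe, ContinuousLinearMap.coe_coe]
      simp only [sub_apply, comp_apply, hadjpow, hz, map_zero, sub_zero, one_apply_eq_self]
  · have key : ∀ k l : ℕ, k < l →
        Submodule.IsOrtho
          ((LinearMap.ker (A : H →ₗ[ℂ] H) ⊓ LinearMap.ker (B : H →ₗ[ℂ] H)).map ((T₂ ^ k : H →L[ℂ] H) : H →ₗ[ℂ] H))
          ((LinearMap.ker (A : H →ₗ[ℂ] H) ⊓ LinearMap.ker (B : H →ₗ[ℂ] H)).map ((T₂ ^ l : H →L[ℂ] H) : H →ₗ[ℂ] H)) := by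
      intro k l hkl
      rw [Submodule.isOrtho_iff_inner_eq]
      rintro _ ⟨w, hw, rfl⟩ _ ⟨w', hw', rfl⟩
      have hwB : B w = 0 := (Submodule.mem_inf.mp hw).2
      have h1 : (inner ℂ ((T₂ ^ k) w) ((T₂ ^ l) w') : ℂ)
          = inner ℂ w ((B ^ k) ((T₂ ^ l) w')) := by
        rw [← hadjpow, adjoint_inner_right]
      have h2 : (B ^ k) ((T₂ ^ l) w') = (T₂ ^ (l - k)) w' := by
        conv_lhs => rw [show l = k + (l - k) from (Nat.add_sub_cancel' hkl.le).symm]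
        rw [pow_add, mul_apply_eq_comp, hcancel]
      obtain ⟨j, hj⟩ : ∃ j, l - k = j + 1 := ⟨l - k - 1, by omega⟩
      rw [ContinuousLinearMap.coe_coe, ContinuousLinearMap.coe_coe, h1, h2, hj, pow_succ' T₂, mul_apply_eq_comp, ← adjoint_inner_left, ← hB, hwB,
        inner_zero_left]
    intro k l hk hl hne
    rcases lt_or_gt_of_ne hne with h | h
    · exact key k l h
    · exact (key l k h).symm
end

section
/- Let T₁ = A_r ⊗ M_z^α and T₂ = M_z^α ⊗ I on H²(𝔻) ⊗ H²(𝔻), where A_r z^n = (r^n/2)z^n and M_z^α f = αzf with |r| = 1, |α| ≤ 1. Then T₁ and T₂ are contractions satisfying T₁T₂ = r T₂T₁ and T₂*T₁ = r T₁T₂*. -/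
open ContinuousLinearMap

open scoped InnerProductSpace ComplexConjugate

section Aux

variable {H : Type*} [NormedAddCommGroup H] [InnerProductSpace ℂ H] [CompleteSpace H]

private lemma aux_inner_hasSum {ι : Type*} (e : HilbertBasis ι ℂ H) (f : ι → ι)
    (hf : Function.Injective f) (d : ι → ℂ) {x : H}
    (hx : HasSum (fun i => d i • e (f i)) x) (i₀ : ι) :
    ⟪e (f i₀), x⟫_ℂ = d i₀ := by
  classical
  have h1 : HasSum (fun i => ⟪e (f i₀), d i • e (f i)⟫_ℂ) ⟪e (f i₀), x⟫_ℂ :=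
    hx.mapL (innerSL ℂ (e (f i₀)))
  have h2 : HasSum (fun i => if i = i₀ then d i₀ else 0) (d i₀) := hasSum_ite_eq i₀ (d i₀)
  have : ∀ i, ⟪e (f i₀), d i • e (f i)⟫_ℂ = if i = i₀ then d i₀ else 0 := by
    intro i
    rw [inner_smul_right, orthonormal_iff_ite.mp e.orthonormal]
    rcases eq_or_ne i i₀ with h | h
    · simp [h]
    · rw [if_neg (hf.ne (Ne.symm h)), if_neg h, mul_zero]
  rw [funext this] at h1
  exact h1.unique h2

private lemma aux_norm_hasSum {ι : Type*} (e : HilbertBasis ι ℂ H) (f : ι → ι)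
    (hf : Function.Injective f) (d : ι → ℂ) {x : H}
    (hx : HasSum (fun i => d i • e (f i)) x) :
    HasSum (fun i => ‖d i‖ ^ 2) (‖x‖ ^ 2) := by
  have h1 : HasSum (fun i => ⟪x, d i • e (f i)⟫_ℂ) ⟪x, x⟫_ℂ := hx.mapL (innerSL ℂ x)
  have h2 : ∀ i, ⟪x, d i • e (f i)⟫_ℂ = ((‖d i‖ ^ 2 : ℝ) : ℂ) := by
    intro i
    rw [inner_smul_right, ← inner_conj_symm, aux_inner_hasSum e f hf d hx i,
      Complex.mul_conj]
    norm_cast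
    simp [Complex.normSq_eq_norm_sq]
  rw [funext h2] at h1
  have h3 : ⟪x, x⟫_ℂ = ((‖x‖ ^ 2 : ℝ) : ℂ) := by
    rw [inner_self_eq_norm_sq_to_K]; norm_cast
  rw [h3] at h1
  exact Complex.hasSum_ofReal.mp h1

private lemma aux_contraction {ι : Type*} (e : HilbertBasis ι ℂ H) (T : H →L[ℂ] H)
    (f : ι → ι) (hf : Function.Injective f) (c : ι → ℂ) (hc : ∀ i, ‖c i‖ ≤ 1)
    (hT : ∀ i, T (e i) = c i • e (f i)) (h : H) : ‖T h‖ ≤ ‖h‖ := by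
  set a : ι → ℂ := fun i => e.repr h i with ha
  have hsum : HasSum (fun i => a i • e i) h := e.hasSum_repr h
  have hx : HasSum (fun i => (a i * c i) • e (f i)) (T h) := by
    have := hsum.mapL T
    convert this using 2 with i
    rw [map_smul, hT i, smul_smul, mul_comm]
  have hTn : HasSum (fun i => ‖a i * c i‖ ^ 2) (‖T h‖ ^ 2) :=
    aux_norm_hasSum e f hf _ hx
  have hhn : HasSum (fun i => ‖a i‖ ^ 2) (‖h‖ ^ 2) :=
    aux_norm_hasSum e id Function.injective_id a (by simpa using hsum)
  have hle : ‖T h‖ ^ 2 ≤ ‖h‖ ^ 2 := by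
    refine hasSum_le (fun i => ?_) hTn hhn
    rw [norm_mul, mul_pow]
    have h1 : ‖c i‖ ^ 2 ≤ 1 := by nlinarith [norm_nonneg (c i), hc i]
    exact mul_le_of_le_one_right (sq_nonneg _) h1
  have := Real.sqrt_le_sqrt hle
  rwa [Real.sqrt_sq (norm_nonneg _), Real.sqrt_sq (norm_nonneg _)] at this

private lemma aux_clm_ext {ι : Type*} (e : HilbertBasis ι ℂ H) {T S : H →L[ℂ] H}
    (h : ∀ i, T (e i) = S (e i)) : T = S :=
  ContinuousLinearMap.ext_on (Submodule.dense_iff_topologicalClosure_eq_top.mpr e.dense_span) (by rintro _ ⟨i, rfl⟩; exact h i)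

private lemma aux_vec_ext {ι : Type*} (e : HilbertBasis ι ℂ H) {x y : H}
    (h : ∀ i, ⟪e i, x⟫_ℂ = ⟪e i, y⟫_ℂ) : x = y := by
  apply e.repr.injective
  apply lp.ext
  funext i
  simpa only [e.repr_apply_apply] using h i

end Aux

/-- `H` plays the role of `H²(𝔻) ⊗ H²(𝔻)` with orthonormal basis `e (m, n) = z₁^m z₂^n`;
`T₁ = A_r ⊗ M_z^α` and `T₂ = M_z^α ⊗ I`. -/
theorem stmt16 {H : Type*} [NormedAddCommGroup H] [InnerProductSpace ℂ H] [CompleteSpace H]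
    (e : HilbertBasis (ℕ × ℕ) ℂ H) (r α : ℂ) (hr : ‖r‖ = 1) (hα : ‖α‖ ≤ 1)
    (T₁ T₂ : H →L[ℂ] H)
    (hT₁ : ∀ m n : ℕ, T₁ (e (m, n)) = (r ^ m / 2 * α) • e (m, n + 1))
    (hT₂ : ∀ m n : ℕ, T₂ (e (m, n)) = α • e (m + 1, n)) :
    (∀ h : H, ‖T₁ h‖ ≤ ‖h‖) ∧ (∀ h : H, ‖T₂ h‖ ≤ ‖h‖) ∧
    T₁ ∘L T₂ = r • (T₂ ∘L T₁) ∧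
    adjoint T₂ ∘L T₁ = r • (T₁ ∘L adjoint T₂) := by
  have hadj0 : ∀ n : ℕ, adjoint T₂ (e (0, n)) = 0 := by
    intro n
    apply aux_vec_ext e
    rintro ⟨p, q⟩
    rw [ContinuousLinearMap.adjoint_inner_right, hT₂ p q, inner_smul_left,
      orthonormal_iff_ite.mp e.orthonormal, inner_zero_right]
    simp
  have hadjS : ∀ m n : ℕ, adjoint T₂ (e (m + 1, n)) = (starRingEnd ℂ α) • e (m, n) := by
    intro m n
    apply aux_vec_ext e
    rintro ⟨p, q⟩
    rw [ContinuousLinearMap.adjoint_inner_right, hT₂ p q, inner_smul_left,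
      inner_smul_right, orthonormal_iff_ite.mp e.orthonormal,
      orthonormal_iff_ite.mp e.orthonormal]
    simp [Prod.ext_iff]
  refine ⟨?_, ?_, ?_, ?_⟩
  · refine aux_contraction e T₁ (fun i => (i.1, i.2 + 1)) ?_ (fun i => r ^ i.1 / 2 * α) ?_ ?_
    · rintro ⟨a, b⟩ ⟨c, d⟩ h
      simpa [Prod.ext_iff] using h
    · rintro ⟨m, n⟩
      have h2 : ‖(2 : ℂ)‖ = 2 := by norm_num
      rw [norm_mul, norm_div, norm_pow, hr, h2, one_pow]
      nlinarith [norm_nonneg α]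
    · rintro ⟨m, n⟩
      exact hT₁ m n
  · refine aux_contraction e T₂ (fun i => (i.1 + 1, i.2)) ?_ (fun _ => α) (fun _ => hα) ?_
    · rintro ⟨a, b⟩ ⟨c, d⟩ h
      simpa [Prod.ext_iff] using h
    · rintro ⟨m, n⟩
      exact hT₂ m n
  · apply aux_clm_ext e
    rintro ⟨m, n⟩
    simp only [ContinuousLinearMap.comp_apply, ContinuousLinearMap.smul_apply,
      hT₁, hT₂, map_smul, smul_smul]
    congr 1
    ring
  · apply aux_clm_ext e
    rintro ⟨m, n⟩
    simp only [ContinuousLinearMap.comp_apply, ContinuousLinearMap.smul_apply,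
      hT₁, map_smul]
    cases m with
    | zero =>
        rw [hadj0, hadj0]
        simp
    | succ m =>
        rw [hadjS, hadjS, map_smul, hT₁]
        simp only [smul_smul]
        congr 1
        ring
end
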